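/- Let A and B be n×n Hermitian complex matrices and, for 1 ≤ s ≤ n, let A_s and B_s denote their order-s leading principal submatrices. If for every 1 ≤ s ≤ n the determinants det(A_s) and det(B_s) are both nonzero and have the same sign, then A and B have the same inertia. -/

import Mathlib

open Matrix Kronecker
open scoped ComplexOrder

/-- Partial transpose on the first factor of an `m × n` bipartite system:
`(ptrans M) ((i,k),(j,l)) = M ((j,k),(i,l))`. -/
def ptrans {m n : ℕ} (M : Matrix (Fin m × Fin n) (Fin m × Fin n) ℂ) :
    Matrix (Fin m × Fin n) (Fin m × Fin n) ℂ :=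
  Matrix.of fun p q => M (q.1, p.2) (p.1, q.2)

/-- Number of negative eigenvalues (with multiplicity) of a Hermitian matrix. -/
noncomputable def iNeg {ι : Type} [Fintype ι] [DecidableEq ι] {M : Matrix ι ι ℂ}
    (hM : M.IsHermitian) : ℕ :=
  (Finset.univ.filter fun i => hM.eigenvalues i < 0).card

/-- Number of zero eigenvalues (with multiplicity) of a Hermitian matrix. -/
noncomputable def iZero {ι : Type} [Fintype ι] [DecidableEq ι] {M : Matrix ι ι ℂ}
    (hM : M.IsHermitian) : ℕ :=
  (Finset.univ.filter fun i => hM.eigenvalues i = 0).card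

/-- Number of positive eigenvalues (with multiplicity) of a Hermitian matrix. -/
noncomputable def iPos {ι : Type} [Fintype ι] [DecidableEq ι] {M : Matrix ι ι ℂ}
    (hM : M.IsHermitian) : ℕ :=
  (Finset.univ.filter fun i => 0 < hM.eigenvalues i).card

open Polynomial


variable {ι : Type} [Fintype ι] [DecidableEq ι]


lemma quad_formula {M : Matrix ι ι ℂ} (hM : M.IsHermitian) (x : ι → ℂ) :
    star x ⬝ᵥ M *ᵥ x =
      ((∑ i, hM.eigenvalues i *
        Complex.normSq (((hM.eigenvectorUnitary : Matrix ι ι ℂ)ᴴ *ᵥ x) i) : ℝ) : ℂ) := by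
  set U : Matrix ι ι ℂ := (hM.eigenvectorUnitary : Matrix ι ι ℂ) with hU
  set y := Uᴴ *ᵥ x with hy
  have hsx : star y = star x ᵥ* U := by
    rw [hy, star_mulVec, conjTranspose_conjTranspose]
  have h1 : star x ⬝ᵥ M *ᵥ x
      = star y ⬝ᵥ (diagonal (RCLike.ofReal ∘ hM.eigenvalues) *ᵥ y) := by
    conv_lhs => rw [hM.spectral_theorem]
    rw [Unitary.conjStarAlgAut_apply, star_eq_conjTranspose, ← mulVec_mulVec, ← mulVec_mulVec, dotProduct_mulVec, ← hsx, hy]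
  rw [h1, dotProduct]
  push_cast
  apply Finset.sum_congr rfl
  intro i _
  rw [mulVec_diagonal]
  have h2 : (starRingEnd ℂ) (y i) * y i = (Complex.normSq (y i) : ℂ) := by
    rw [Complex.normSq_eq_conj_mul_self]
  simp only [Pi.star_apply, Function.comp_apply, Complex.star_def]
  show (starRingEnd ℂ) (y i) * ((hM.eigenvalues i : ℂ) * y i) = _
  calc (starRingEnd ℂ) (y i) * ((hM.eigenvalues i : ℂ) * y i)
      = (hM.eigenvalues i : ℂ) * ((starRingEnd ℂ) (y i) * y i) := by ring
    _ = (hM.eigenvalues i : ℂ) * (Complex.normSq (y i) : ℂ) := by rw [h2]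

lemma unitary_det_isUnit {M : Matrix ι ι ℂ} (hM : M.IsHermitian) :
    IsUnit ((hM.eigenvectorUnitary : Matrix ι ι ℂ)ᴴ).det := by
  have hUU : star (hM.eigenvectorUnitary : Matrix ι ι ℂ) * (hM.eigenvectorUnitary : Matrix ι ι ℂ)
      = 1 := (Matrix.mem_unitaryGroup_iff').mp (hM.eigenvectorUnitary).2
  have : ((hM.eigenvectorUnitary : Matrix ι ι ℂ)ᴴ).det
      * ((hM.eigenvectorUnitary : Matrix ι ι ℂ)).det = 1 := by
    rw [← det_mul, ← star_eq_conjTranspose, hUU, det_one]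
  exact IsUnit.of_mul_eq_one _ this

lemma iPos_le_of_conj {M C : Matrix ι ι ℂ} (hM : M.IsHermitian) (hC : IsUnit C.det)
    (hN : (Cᴴ * M * C).IsHermitian) : iPos hM ≤ iPos hN := by
  by_contra hlt
  push_neg at hlt
  set N := Cᴴ * M * C with hNdef
  set U : Matrix ι ι ℂ := (hM.eigenvectorUnitary : Matrix ι ι ℂ) with hU
  set V : Matrix ι ι ℂ := (hN.eigenvectorUnitary : Matrix ι ι ℂ) with hV
  set L : ((ι → ℂ) →ₗ[ℂ] ({i : ι // ¬ 0 < hM.eigenvalues i} → ℂ) ×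
      ({j : ι // 0 < hN.eigenvalues j} → ℂ)) :=
    LinearMap.prod
      ((LinearMap.funLeft ℂ ℂ Subtype.val).comp (Matrix.mulVecLin (Uᴴ * C)))
      ((LinearMap.funLeft ℂ ℂ Subtype.val).comp (Matrix.mulVecLin Vᴴ)) with hL
  have hcard : (Finset.univ.filter fun i => ¬ 0 < hM.eigenvalues i).card + iPos hN
      < Fintype.card ι := by
    have := Finset.card_filter_add_card_filter_not (s := Finset.univ)
      (p := fun i => 0 < hM.eigenvalues i)
    simp only [Finset.card_univ] at this
    unfold iPos at *
    omega
  have hker : ∃ x : ι → ℂ, x ≠ 0 ∧ L x = 0 := by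
    by_contra hinj
    push_neg at hinj
    have hLinj : Function.Injective L := by
      rw [← LinearMap.ker_eq_bot, Submodule.eq_bot_iff]
      intro x hx
      by_contra hx0
      exact hinj x hx0 (LinearMap.mem_ker.mp hx)
    have h1 := LinearMap.finrank_le_finrank_of_injective hLinj
    simp only [Module.finrank_prod, Module.finrank_pi, Fintype.card_subtype,
      Module.finrank_pi_fintype] at h1
    unfold iPos at hcard
    omega
  obtain ⟨x, hx0, hLx⟩ := hker
  have hz : ∀ i : ι, ¬ 0 < hM.eigenvalues i → ((Uᴴ * C) *ᵥ x) i = 0 := by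
    intro i hi
    have := congrFun (congrArg Prod.fst hLx) ⟨i, hi⟩
    simpa [hL] using this
  have hw : ∀ j : ι, 0 < hN.eigenvalues j → (Vᴴ *ᵥ x) j = 0 := by
    intro j hj
    have := congrFun (congrArg Prod.snd hLx) ⟨j, hj⟩
    simpa [hL] using this
  set z := (Uᴴ * C) *ᵥ x with hzdef
  set w := Vᴴ *ᵥ x with hwdef
  have hQ : star (C *ᵥ x) ⬝ᵥ M *ᵥ (C *ᵥ x) = star x ⬝ᵥ N *ᵥ x := by
    rw [hNdef, ← mulVec_mulVec, ← mulVec_mulVec, dotProduct_mulVec (star x),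
      ← star_mulVec]
  have hS1 : star (C *ᵥ x) ⬝ᵥ M *ᵥ (C *ᵥ x)
      = ((∑ i, hM.eigenvalues i * Complex.normSq (z i) : ℝ) : ℂ) := by
    rw [quad_formula hM (C *ᵥ x)]
    norm_cast
    refine Finset.sum_congr rfl fun i _ => ?_
    rw [hzdef, ← mulVec_mulVec]
  have hS2 : star x ⬝ᵥ N *ᵥ x
      = ((∑ j, hN.eigenvalues j * Complex.normSq (w j) : ℝ) : ℂ) := by
    rw [quad_formula hN x]
  have hSeq : (∑ i, hM.eigenvalues i * Complex.normSq (z i))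
      = ∑ j, hN.eigenvalues j * Complex.normSq (w j) := by
    have := hS1.symm.trans (hQ.trans hS2)
    exact_mod_cast this
  have hzne : z ≠ 0 := by
    intro hzz
    apply hx0
    have hinj1 : Function.Injective (Uᴴ * C).mulVec := by
      rw [Matrix.mulVec_injective_iff_isUnit, Matrix.isUnit_iff_isUnit_det, det_mul]
      exact (unitary_det_isUnit hM).mul hC
    apply hinj1
    rw [← hzdef, hzz, mulVec_zero]
  have hpos : 0 < ∑ i, hM.eigenvalues i * Complex.normSq (z i) := by
    obtain ⟨i0, hi0⟩ : ∃ i, z i ≠ 0 := Function.ne_iff.mp hzne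
    have hi0pos : 0 < hM.eigenvalues i0 := by
      by_contra hcon
      exact hi0 (hz i0 hcon)
    apply Finset.sum_pos'
    · intro i _
      by_cases hp : 0 < hM.eigenvalues i
      · exact mul_nonneg hp.le (Complex.normSq_nonneg _)
      · rw [hz i hp]
        simp
    · exact ⟨i0, Finset.mem_univ _,
        mul_pos hi0pos (Complex.normSq_pos.mpr hi0)⟩
  have hnonpos : (∑ j, hN.eigenvalues j * Complex.normSq (w j)) ≤ 0 := by
    apply Finset.sum_nonpos
    intro j _
    by_cases hp : 0 < hN.eigenvalues j
    · rw [hw j hp]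
      simp
    · push_neg at hp
      exact mul_nonpos_of_nonpos_of_nonneg hp (Complex.normSq_nonneg _)
  rw [hSeq] at hpos
  linarith

lemma iNeg_le_of_conj {M C : Matrix ι ι ℂ} (hM : M.IsHermitian) (hC : IsUnit C.det)
    (hN : (Cᴴ * M * C).IsHermitian) : iNeg hM ≤ iNeg hN := by
  by_contra hlt
  push_neg at hlt
  set N := Cᴴ * M * C with hNdef
  set U : Matrix ι ι ℂ := (hM.eigenvectorUnitary : Matrix ι ι ℂ) with hU
  set V : Matrix ι ι ℂ := (hN.eigenvectorUnitary : Matrix ι ι ℂ) with hV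
  set L : ((ι → ℂ) →ₗ[ℂ] ({i : ι // ¬ hM.eigenvalues i < 0} → ℂ) ×
      ({j : ι // hN.eigenvalues j < 0} → ℂ)) :=
    LinearMap.prod
      ((LinearMap.funLeft ℂ ℂ Subtype.val).comp (Matrix.mulVecLin (Uᴴ * C)))
      ((LinearMap.funLeft ℂ ℂ Subtype.val).comp (Matrix.mulVecLin Vᴴ)) with hL
  have hcard : (Finset.univ.filter fun i => ¬ hM.eigenvalues i < 0).card + iNeg hN
      < Fintype.card ι := by
    have := Finset.card_filter_add_card_filter_not (s := Finset.univ)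
      (p := fun i => hM.eigenvalues i < 0)
    simp only [Finset.card_univ] at this
    unfold iNeg at *
    omega
  have hker : ∃ x : ι → ℂ, x ≠ 0 ∧ L x = 0 := by
    by_contra hinj
    push_neg at hinj
    have hLinj : Function.Injective L := by
      rw [← LinearMap.ker_eq_bot, Submodule.eq_bot_iff]
      intro x hx
      by_contra hx0
      exact hinj x hx0 (LinearMap.mem_ker.mp hx)
    have h1 := LinearMap.finrank_le_finrank_of_injective hLinj
    simp only [Module.finrank_prod, Module.finrank_pi, Fintype.card_subtype,
      Module.finrank_pi_fintype] at h1
    unfold iNeg at hcard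
    omega
  obtain ⟨x, hx0, hLx⟩ := hker
  have hz : ∀ i : ι, ¬ hM.eigenvalues i < 0 → ((Uᴴ * C) *ᵥ x) i = 0 := by
    intro i hi
    have := congrFun (congrArg Prod.fst hLx) ⟨i, hi⟩
    simpa [hL] using this
  have hw : ∀ j : ι, hN.eigenvalues j < 0 → (Vᴴ *ᵥ x) j = 0 := by
    intro j hj
    have := congrFun (congrArg Prod.snd hLx) ⟨j, hj⟩
    simpa [hL] using this
  set z := (Uᴴ * C) *ᵥ x with hzdef
  set w := Vᴴ *ᵥ x with hwdef
  have hQ : star (C *ᵥ x) ⬝ᵥ M *ᵥ (C *ᵥ x) = star x ⬝ᵥ N *ᵥ x := by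
    rw [hNdef, ← mulVec_mulVec, ← mulVec_mulVec, dotProduct_mulVec (star x),
      ← star_mulVec]
  have hS1 : star (C *ᵥ x) ⬝ᵥ M *ᵥ (C *ᵥ x)
      = ((∑ i, hM.eigenvalues i * Complex.normSq (z i) : ℝ) : ℂ) := by
    rw [quad_formula hM (C *ᵥ x)]
    norm_cast
    refine Finset.sum_congr rfl fun i _ => ?_
    rw [hzdef, ← mulVec_mulVec]
  have hS2 : star x ⬝ᵥ N *ᵥ x
      = ((∑ j, hN.eigenvalues j * Complex.normSq (w j) : ℝ) : ℂ) := by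
    rw [quad_formula hN x]
  have hSeq : (∑ i, hM.eigenvalues i * Complex.normSq (z i))
      = ∑ j, hN.eigenvalues j * Complex.normSq (w j) := by
    have := hS1.symm.trans (hQ.trans hS2)
    exact_mod_cast this
  have hzne : z ≠ 0 := by
    intro hzz
    apply hx0
    have hinj1 : Function.Injective (Uᴴ * C).mulVec := by
      rw [Matrix.mulVec_injective_iff_isUnit, Matrix.isUnit_iff_isUnit_det, det_mul]
      exact (unitary_det_isUnit hM).mul hC
    apply hinj1
    rw [← hzdef, hzz, mulVec_zero]
  have hneg : 0 < ∑ i, -(hM.eigenvalues i * Complex.normSq (z i)) := by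
    obtain ⟨i0, hi0⟩ : ∃ i, z i ≠ 0 := Function.ne_iff.mp hzne
    have hi0neg : hM.eigenvalues i0 < 0 := by
      by_contra hcon
      exact hi0 (hz i0 hcon)
    apply Finset.sum_pos'
    · intro i _
      by_cases hp : hM.eigenvalues i < 0
      · have := mul_nonpos_of_nonpos_of_nonneg hp.le (Complex.normSq_nonneg (z i))
        linarith
      · rw [hz i hp]
        simp
    · refine ⟨i0, Finset.mem_univ _, ?_⟩
      have := mul_neg_of_neg_of_pos hi0neg (Complex.normSq_pos.mpr hi0)
      linarith
  have hnonneg : 0 ≤ (∑ j, hN.eigenvalues j * Complex.normSq (w j)) := by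
    apply Finset.sum_nonneg
    intro j _
    by_cases hp : hN.eigenvalues j < 0
    · rw [hw j hp]
      simp
    · push_neg at hp
      exact mul_nonneg hp (Complex.normSq_nonneg _)
  rw [Finset.sum_neg_distrib, hSeq] at hneg
  linarith

lemma iPos_congr_mat {M N : Matrix ι ι ℂ} (h : M = N) (hM : M.IsHermitian)
    (hN : N.IsHermitian) : iPos hM = iPos hN := by subst h; rfl

lemma iNeg_congr_mat {M N : Matrix ι ι ℂ} (h : M = N) (hM : M.IsHermitian)
    (hN : N.IsHermitian) : iNeg hM = iNeg hN := by subst h; rfl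

lemma iZero_congr_mat {M N : Matrix ι ι ℂ} (h : M = N) (hM : M.IsHermitian)
    (hN : N.IsHermitian) : iZero hM = iZero hN := by subst h; rfl

lemma conj_conj_inv {M C : Matrix ι ι ℂ} (hC : IsUnit C.det) :
    (C⁻¹)ᴴ * (Cᴴ * M * C) * C⁻¹ = M := by
  have h1 : (C⁻¹)ᴴ * Cᴴ = 1 := by
    rw [← conjTranspose_mul, Matrix.mul_nonsing_inv _ hC, conjTranspose_one]
  rw [← Matrix.mul_assoc, ← Matrix.mul_assoc, h1, Matrix.one_mul,
    Matrix.mul_assoc, Matrix.mul_nonsing_inv _ hC, Matrix.mul_one]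

lemma iPos_conj {M C : Matrix ι ι ℂ} (hM : M.IsHermitian) (hC : IsUnit C.det)
    (hN : (Cᴴ * M * C).IsHermitian) : iPos hN = iPos hM := by
  refine le_antisymm ?_ (iPos_le_of_conj hM hC hN)
  have hC' : IsUnit (C⁻¹).det := by
    rw [Matrix.det_nonsing_inv]
    exact hC.ringInverse
  have h2 : ((C⁻¹)ᴴ * (Cᴴ * M * C) * C⁻¹).IsHermitian := by
    rw [conj_conj_inv hC]; exact hM
  have := iPos_le_of_conj hN hC' h2
  rwa [iPos_congr_mat (conj_conj_inv hC) h2 hM] at this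

lemma iNeg_conj {M C : Matrix ι ι ℂ} (hM : M.IsHermitian) (hC : IsUnit C.det)
    (hN : (Cᴴ * M * C).IsHermitian) : iNeg hN = iNeg hM := by
  refine le_antisymm ?_ (iNeg_le_of_conj hM hC hN)
  have hC' : IsUnit (C⁻¹).det := by
    rw [Matrix.det_nonsing_inv]
    exact hC.ringInverse
  have h2 : ((C⁻¹)ᴴ * (Cᴴ * M * C) * C⁻¹).IsHermitian := by
    rw [conj_conj_inv hC]; exact hM
  have := iNeg_le_of_conj hN hC' h2
  rwa [iNeg_congr_mat (conj_conj_inv hC) h2 hM] at this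


lemma charpoly_conj_unitary (U D : Matrix ι ι ℂ) (h : U * star U = 1) :
    (U * D * star U).charpoly = D.charpoly := by
  have hmap : charmatrix (U * D * star U)
      = (C : ℂ →+* ℂ[X]).mapMatrix U * charmatrix D * (C : ℂ →+* ℂ[X]).mapMatrix (star U) := by
    unfold charmatrix
    rw [mul_sub, sub_mul]
    congr 1
    · rw [mul_assoc,
        (scalar_commute (X : ℂ[X]) (fun r => Commute.all _ r)
          ((C : ℂ →+* ℂ[X]).mapMatrix (star U))).eq,
        ← mul_assoc, ← _root_.map_mul, h, _root_.map_one, one_mul]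
    · rw [_root_.map_mul, _root_.map_mul]
  have hdet : ((C : ℂ →+* ℂ[X]).mapMatrix U).det * ((C : ℂ →+* ℂ[X]).mapMatrix (star U)).det
      = 1 := by
    rw [← det_mul, ← _root_.map_mul, h, _root_.map_one, det_one]
  unfold Matrix.charpoly
  rw [hmap, det_mul, det_mul, mul_right_comm, hdet, one_mul]

lemma charpoly_diagonal_real (d : ι → ℝ) :
    (diagonal (RCLike.ofReal ∘ d) : Matrix ι ι ℂ).charpoly
      = (Finset.univ.val.map fun i => (X - C ((d i : ℂ)))).prod := by
  have h1 : charmatrix (diagonal (RCLike.ofReal ∘ d) : Matrix ι ι ℂ)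
      = diagonal fun i => (X - C ((d i : ℂ))) := by
    ext i j
    by_cases hij : i = j
    · subst hij; rw [charmatrix_apply_eq, diagonal_apply_eq, diagonal_apply_eq]; rfl
    · rw [charmatrix_apply_ne _ _ _ hij, diagonal_apply_ne _ hij, diagonal_apply_ne _ hij,
        map_zero, neg_zero]
  rw [Matrix.charpoly, h1, det_diagonal, Finset.prod_eq_multiset_prod]

lemma charpoly_roots_herm {M : Matrix ι ι ℂ} (hM : M.IsHermitian) :
    M.charpoly.roots = Finset.univ.val.map (fun i => (hM.eigenvalues i : ℂ)) := by
  have h0 : M.charpoly = (diagonal (RCLike.ofReal ∘ hM.eigenvalues) : Matrix ι ι ℂ).charpoly := by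
    conv_lhs => rw [hM.spectral_theorem]
    exact charpoly_conj_unitary _ _ ((Matrix.mem_unitaryGroup_iff).mp (hM.eigenvectorUnitary).2)
  have h2 := roots_multiset_prod_X_sub_C (Finset.univ.val.map fun i => ((hM.eigenvalues i : ℂ)))
  rw [Multiset.map_map] at h2
  rw [h0, charpoly_diagonal_real]
  exact h2

lemma iNeg_eq_countP {M : Matrix ι ι ℂ} (hM : M.IsHermitian) :
    iNeg hM = M.charpoly.roots.countP (fun z => z.re < 0) := by
  rw [charpoly_roots_herm hM, Multiset.countP_map, iNeg, Finset.card, Finset.filter_val]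
  simp

lemma iPos_eq_countP {M : Matrix ι ι ℂ} (hM : M.IsHermitian) :
    iPos hM = M.charpoly.roots.countP (fun z => 0 < z.re) := by
  rw [charpoly_roots_herm hM, Multiset.countP_map, iPos, Finset.card, Finset.filter_val]
  simp

lemma iZero_eq_countP {M : Matrix ι ι ℂ} (hM : M.IsHermitian) :
    iZero hM = M.charpoly.roots.countP (fun z => z.re = 0) := by
  rw [charpoly_roots_herm hM, Multiset.countP_map, iZero, Finset.card, Finset.filter_val]
  simp

variable {κ : Type} [Fintype κ] [DecidableEq κ]

lemma iNeg_reindex {M : Matrix ι ι ℂ} (hM : M.IsHermitian) (e : ι ≃ κ)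
    (h2 : (reindex e e M).IsHermitian) : iNeg h2 = iNeg hM := by
  rw [iNeg_eq_countP, iNeg_eq_countP, charpoly_reindex]

lemma iPos_reindex {M : Matrix ι ι ℂ} (hM : M.IsHermitian) (e : ι ≃ κ)
    (h2 : (reindex e e M).IsHermitian) : iPos h2 = iPos hM := by
  rw [iPos_eq_countP, iPos_eq_countP, charpoly_reindex]

lemma iZero_reindex {M : Matrix ι ι ℂ} (hM : M.IsHermitian) (e : ι ≃ κ)
    (h2 : (reindex e e M).IsHermitian) : iZero h2 = iZero hM := by
  rw [iZero_eq_countP, iZero_eq_countP, charpoly_reindex]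

lemma roots_blocks {M₁ : Matrix ι ι ℂ} {M₂ : Matrix κ κ ℂ} :
    (fromBlocks M₁ 0 0 M₂ : Matrix (ι ⊕ κ) (ι ⊕ κ) ℂ).charpoly.roots
      = M₁.charpoly.roots + M₂.charpoly.roots := by
  rw [charpoly_fromBlocks_zero₂₁, roots_mul]
  exact mul_ne_zero (charpoly_monic M₁).ne_zero (charpoly_monic M₂).ne_zero

lemma iNeg_blocks {M₁ : Matrix ι ι ℂ} {M₂ : Matrix κ κ ℂ} (h1 : M₁.IsHermitian)
    (h2 : M₂.IsHermitian) (h : (fromBlocks M₁ 0 0 M₂ : Matrix (ι ⊕ κ) (ι ⊕ κ) ℂ).IsHermitian) :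
    iNeg h = iNeg h1 + iNeg h2 := by
  rw [iNeg_eq_countP, iNeg_eq_countP, iNeg_eq_countP, roots_blocks, Multiset.countP_add]

lemma iPos_blocks {M₁ : Matrix ι ι ℂ} {M₂ : Matrix κ κ ℂ} (h1 : M₁.IsHermitian)
    (h2 : M₂.IsHermitian) (h : (fromBlocks M₁ 0 0 M₂ : Matrix (ι ⊕ κ) (ι ⊕ κ) ℂ).IsHermitian) :
    iPos h = iPos h1 + iPos h2 := by
  rw [iPos_eq_countP, iPos_eq_countP, iPos_eq_countP, roots_blocks, Multiset.countP_add]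

lemma iZero_blocks {M₁ : Matrix ι ι ℂ} {M₂ : Matrix κ κ ℂ} (h1 : M₁.IsHermitian)
    (h2 : M₂.IsHermitian) (h : (fromBlocks M₁ 0 0 M₂ : Matrix (ι ⊕ κ) (ι ⊕ κ) ℂ).IsHermitian) :
    iZero h = iZero h1 + iZero h2 := by
  rw [iZero_eq_countP, iZero_eq_countP, iZero_eq_countP, roots_blocks, Multiset.countP_add]

lemma charpoly_fin_one (M : Matrix (Fin 1) (Fin 1) ℂ) : M.charpoly = X - C (M 0 0) := by
  rw [Matrix.charpoly, det_fin_one, charmatrix_apply_eq]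

lemma iNeg_fin_one {M : Matrix (Fin 1) (Fin 1) ℂ} (hM : M.IsHermitian) :
    iNeg hM = if (M 0 0).re < 0 then 1 else 0 := by
  rw [iNeg_eq_countP, charpoly_fin_one, roots_X_sub_C,
    show ∀ a : ℂ, ({a} : Multiset ℂ) = a ::ₘ 0 from fun _ => rfl, Multiset.countP_cons,
    Multiset.countP_zero, zero_add]

lemma iPos_fin_one {M : Matrix (Fin 1) (Fin 1) ℂ} (hM : M.IsHermitian) :
    iPos hM = if 0 < (M 0 0).re then 1 else 0 := by
  rw [iPos_eq_countP, charpoly_fin_one, roots_X_sub_C,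
    show ∀ a : ℂ, ({a} : Multiset ℂ) = a ::ₘ 0 from fun _ => rfl, Multiset.countP_cons,
    Multiset.countP_zero, zero_add]

lemma iZero_fin_one {M : Matrix (Fin 1) (Fin 1) ℂ} (hM : M.IsHermitian) :
    iZero hM = if (M 0 0).re = 0 then 1 else 0 := by
  rw [iZero_eq_countP, charpoly_fin_one, roots_X_sub_C,
    show ∀ a : ℂ, ({a} : Multiset ℂ) = a ::ₘ 0 from fun _ => rfl, Multiset.countP_cons,
    Multiset.countP_zero, zero_add]

lemma counts_total {M : Matrix ι ι ℂ} (hM : M.IsHermitian) :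
    iNeg hM + iZero hM + iPos hM = Fintype.card ι := by
  classical
  unfold iNeg iZero iPos
  rw [← Finset.card_union_of_disjoint, ← Finset.card_union_of_disjoint]
  · rw [← Finset.filter_or, ← Finset.filter_or]
    rw [Finset.filter_true_of_mem, Finset.card_univ]
    intro i _
    rcases lt_trichotomy (hM.eigenvalues i) 0 with h | h | h
    · exact Or.inl (Or.inl h)
    · exact Or.inl (Or.inr h)
    · exact Or.inr h
  · rw [← Finset.filter_or]
    simp only [Finset.disjoint_filter]
    rintro i _ (h | h) <;> intro hpos <;> linarith
  · simp only [Finset.disjoint_filter]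
    intro i _ h he
    linarith [he.le, he.ge]


noncomputable def minorDet {n : ℕ} (A : Matrix (Fin n) (Fin n) ℂ) (s : ℕ) : ℂ :=
  if h : s ≤ n then (A.submatrix (Fin.castLE h) (Fin.castLE h)).det else 0

lemma iZero_conj {M C : Matrix ι ι ℂ} (hM : M.IsHermitian) (hC : IsUnit C.det)
    (hN : (Cᴴ * M * C).IsHermitian) : iZero hN = iZero hM := by
  have h1 := counts_total hM
  have h2 := counts_total hN
  have h3 := iNeg_conj hM hC hN
  have h4 := iPos_conj hM hC hN
  omega

lemma minorDet_zero {n : ℕ} (A : Matrix (Fin n) (Fin n) ℂ) : minorDet A 0 = 1 := by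
  rw [minorDet, dif_pos (Nat.zero_le n)]
  exact Matrix.det_isEmpty

lemma minorDet_self {n : ℕ} (A : Matrix (Fin n) (Fin n) ℂ) : minorDet A n = A.det := by
  rw [minorDet, dif_pos le_rfl]
  congr 1

lemma minorDet_submatrix {n : ℕ} (A : Matrix (Fin (n+1)) (Fin (n+1)) ℂ) (s : ℕ) (hs : s ≤ n) :
    minorDet (A.submatrix (Fin.castLE (Nat.le_succ n)) (Fin.castLE (Nat.le_succ n))) s
      = minorDet A s := by
  rw [minorDet, minorDet, dif_pos hs, dif_pos (hs.trans (Nat.le_succ n)),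
    Matrix.submatrix_submatrix]
  congr 1

set_option maxHeartbeats 2000000 in
lemma main_count : ∀ (n : ℕ) (A : Matrix (Fin n) (Fin n) ℂ) (hA : A.IsHermitian),
    (∀ s, 1 ≤ s → s ≤ n → minorDet A s ≠ 0) →
    iZero hA = 0 ∧
    iNeg hA = ((Finset.range n).filter
      (fun s => (minorDet A (s+1)).re * (minorDet A s).re < 0)).card := by
  intro n
  induction n with
  | zero =>
    intro A hA _
    constructor
    · simp [iZero]
    · simp [iNeg]
  | succ n IH =>
    intro A hA hmin
    have hmin' : ∀ s, s ≤ n + 1 → minorDet A s ≠ 0 := by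
      intro s hs
      rcases Nat.eq_zero_or_pos s with h0 | h1
      · rw [h0, minorDet_zero]; exact one_ne_zero
      · exact hmin s h1 hs
    set A' := A.submatrix (Fin.castLE (Nat.le_succ n)) (Fin.castLE (Nat.le_succ n)) with hA'def
    have hA' : A'.IsHermitian := hA.submatrix _
    have hdetA'ne : A'.det ≠ 0 := by
      have := hmin' n (Nat.le_succ n)
      rwa [minorDet, dif_pos (Nat.le_succ n)] at this
    have hdetAne : A.det ≠ 0 := by
      have := hmin' (n+1) le_rfl
      rwa [minorDet_self] at this
    obtain ⟨hz', hn'⟩ := IH A' hA' (fun s h1 hs =>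
      (minorDet_submatrix A s hs) ▸ hmin s h1 (hs.trans (Nat.le_succ n)))
    -- reindex to a block matrix
    set e : Fin n ⊕ Fin 1 ≃ Fin (n+1) := finSumFinEquiv with he
    set M : Matrix (Fin n ⊕ Fin 1) (Fin n ⊕ Fin 1) ℂ := A.submatrix e e with hMdef
    have hM : M.IsHermitian := hA.submatrix e
    have hblk11 : M.toBlocks₁₁ = A' := by
      ext i j
      show A (e (Sum.inl i)) (e (Sum.inl j)) = A _ _
      congr 1 <;> exact Fin.ext (by simp [he])
    set B := M.toBlocks₁₂ with hBdef
    set Cm := M.toBlocks₂₁ with hCmdef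
    set D := M.toBlocks₂₂ with hDdef
    have hMeq : M = fromBlocks A' B Cm D := by
      rw [← hblk11, hBdef, hCmdef, hDdef, fromBlocks_toBlocks]
    have hCm : Cm = Bᴴ := by
      ext i j
      show M (Sum.inr i) (Sum.inl j) = star (M (Sum.inl j) (Sum.inr i))
      rw [← hM.apply]
    have hD : D.IsHermitian := hM.submatrix Sum.inr
    haveI : Invertible A' := A'.invertibleOfIsUnitDet (isUnit_iff_ne_zero.mpr hdetA'ne)
    have hinvH : (⅟A')ᴴ = ⅟A' := by
      rw [Matrix.invOf_eq_nonsing_inv, Matrix.conjTranspose_nonsing_inv, hA'.eq]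
    set S := D - Cm * ⅟A' * B with hSdef
    have hS : S.IsHermitian := by
      have h1 : (Cm * ⅟A' * B)ᴴ = Cm * ⅟A' * B := by
        rw [conjTranspose_mul, conjTranspose_mul, hinvH, hCm, conjTranspose_conjTranspose,
          ← Matrix.mul_assoc]
      exact hD.sub h1
    set L := (fromBlocks 1 (⅟A' * B) 0 1 : Matrix (Fin n ⊕ Fin 1) (Fin n ⊕ Fin 1) ℂ) with hLdef
    have hLH : Lᴴ = fromBlocks 1 0 (Cm * ⅟A') 1 := by
      rw [hLdef, fromBlocks_conjTranspose, conjTranspose_mul, hinvH, hCm]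
      simp
    have hcong : M = Lᴴ * (fromBlocks A' 0 0 S) * L := by
      rw [hLH, hMeq, hSdef]
      exact fromBlocks_eq_of_invertible₁₁ A' B Cm D
    have hdetL : IsUnit L.det := by
      rw [hLdef, det_fromBlocks_zero₂₁, det_one, det_one, one_mul]
      exact isUnit_one
    have hblkH : (fromBlocks A' 0 0 S : Matrix (Fin n ⊕ Fin 1) (Fin n ⊕ Fin 1) ℂ).IsHermitian := by
      rw [Matrix.isHermitian_fromBlocks_iff]
      exact ⟨hA', by simp, by simp, hS⟩
    have hconj : (Lᴴ * (fromBlocks A' 0 0 S) * L).IsHermitian := hcong ▸ hM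
    -- determinant relation
    have hsub : A.submatrix ⇑e ⇑e = reindex e.symm e.symm A := by
      rw [reindex_apply, Equiv.symm_symm]
    have hdetM : M.det = A.det := by
      rw [hMdef, hsub, Matrix.det_reindex_self]
    have hdetL1 : L.det = 1 := by
      rw [hLdef, det_fromBlocks_zero₂₁, det_one, det_one, one_mul]
    have hdetblk : M.det = A'.det * S.det := by
      rw [hcong, det_mul, det_mul, det_conjTranspose, hdetL1, star_one, one_mul, mul_one,
        det_fromBlocks_zero₂₁]
    have hdetS : S.det = S 0 0 := det_fin_one S
    have hdetrel : A.det = A'.det * S 0 0 := by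
      rw [← hdetS, ← hdetblk, hdetM]
    -- realness
    have hreal : ∀ {k : ℕ} (T : Matrix (Fin k) (Fin k) ℂ), T.IsHermitian → T.det.im = 0 := by
      intro k T hT
      have h1 : star T.det = T.det := by rw [← det_conjTranspose, hT.eq]
      have := congrArg Complex.im h1
      simp only [Complex.star_def, Complex.conj_im] at this
      linarith
    have hS00star : star (S 0 0) = S 0 0 := by
      exact hS.apply 0 0
    have hS00im : (S 0 0).im = 0 := by
      have := congrArg Complex.im hS00star
      simp only [Complex.star_def, Complex.conj_im] at this
      linarith
    have hdetA'im : A'.det.im = 0 := hreal A' hA'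
    have hdetA're : A'.det.re ≠ 0 := by
      intro hc
      exact hdetA'ne (Complex.ext hc hdetA'im)
    have hS00ne : S 0 0 ≠ 0 := by
      intro hc
      rw [hc, mul_zero] at hdetrel
      exact hdetAne hdetrel
    have hS00re : (S 0 0).re ≠ 0 := by
      intro hc
      exact hS00ne (Complex.ext hc hS00im)
    have hdetAre : A.det.re = A'.det.re * (S 0 0).re := by
      rw [hdetrel, Complex.mul_re, hdetA'im, zero_mul, sub_zero]
    -- transport the counts
    have hherm1 : (reindex e.symm e.symm A).IsHermitian := by
      rw [reindex_apply]
      exact hA.submatrix _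
    have hMM : M = reindex e.symm e.symm A := by rw [hMdef, hsub]
    have hcnegA : iNeg hA = iNeg hM := by
      rw [← iNeg_reindex hA e.symm hherm1]
      all_goals exact (iNeg_congr_mat hMM hM hherm1)
    have hczeroA : iZero hA = iZero hM := by
      rw [← iZero_reindex hA e.symm hherm1]
      all_goals exact (iZero_congr_mat hMM hM hherm1)
    have hcneg2 : iNeg hM = iNeg hblkH := by
      rw [iNeg_congr_mat hcong hM hconj]
      exact iNeg_conj hblkH hdetL hconj
    have hczero2 : iZero hM = iZero hblkH := by
      rw [iZero_congr_mat hcong hM hconj]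
      exact iZero_conj hblkH hdetL hconj
    have hnegblk : iNeg hblkH = iNeg hA' + iNeg hS := iNeg_blocks hA' hS hblkH
    have hzeroblk : iZero hblkH = iZero hA' + iZero hS := iZero_blocks hA' hS hblkH
    have hnegS : iNeg hS = if (S 0 0).re < 0 then 1 else 0 := iNeg_fin_one hS
    have hzeroS : iZero hS = 0 := by
      rw [iZero_fin_one hS, if_neg hS00re]
    constructor
    · rw [hczeroA, hczero2, hzeroblk, hz', hzeroS]
    · rw [hcnegA, hcneg2, hnegblk, hn', hnegS]
      -- now the finset arithmetic
      rw [Finset.range_add_one, Finset.filter_insert]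
      have hcondn : ((minorDet A (n+1)).re * (minorDet A n).re < 0) ↔ (S 0 0).re < 0 := by
        rw [minorDet_self]
        rw [show minorDet A n = A'.det by rw [minorDet, dif_pos (Nat.le_succ n)]]
        rw [hdetAre]
        constructor
        · intro hlt
          by_contra hge
          push_neg at hge
          nlinarith [mul_self_pos.mpr hdetA're]
        · intro hlt
          nlinarith [mul_self_pos.mpr hdetA're]
      have hfilters : (Finset.range n).filter
            (fun s => (minorDet A (s+1)).re * (minorDet A s).re < 0)
          = (Finset.range n).filter
            (fun s => (minorDet A' (s+1)).re * (minorDet A' s).re < 0) := by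
        apply Finset.filter_congr
        intro s hs
        rw [Finset.mem_range] at hs
        rw [minorDet_submatrix A s hs.le, minorDet_submatrix A (s+1) hs]
      rw [hfilters]
      by_cases hc : (S 0 0).re < 0
      · rw [if_pos (hcondn.mpr hc), if_pos hc, Finset.card_insert_of_notMem, add_comm]
        intro hmem
        exact absurd (Finset.mem_range.mp (Finset.mem_of_mem_filter n hmem)) (lt_irrefl n)
      · rw [if_neg (fun hcon => hc (hcondn.mp hcon)), if_neg hc, add_zero]


/-- If all leading principal minors of Hermitian `A` and `B` are nonzero and
have the same sign, then `A` and `B` have the same inertia. -/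
theorem inertia_eq_of_minors_same_sign {n : ℕ} (A B : Matrix (Fin n) (Fin n) ℂ)
    (hA : A.IsHermitian) (hB : B.IsHermitian)
    (h : ∀ s : ℕ, 1 ≤ s → ∀ hs : s ≤ n,
      (A.submatrix (Fin.castLE hs) (Fin.castLE hs)).det ≠ 0 ∧
      (B.submatrix (Fin.castLE hs) (Fin.castLE hs)).det ≠ 0 ∧
      0 < (A.submatrix (Fin.castLE hs) (Fin.castLE hs)).det.re *
          (B.submatrix (Fin.castLE hs) (Fin.castLE hs)).det.re) :
    iNeg hA = iNeg hB ∧ iZero hA = iZero hB ∧ iPos hA = iPos hB := by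
  have hAm : ∀ s, 1 ≤ s → s ≤ n → minorDet A s ≠ 0 := by
    intro s h1 hs
    rw [minorDet, dif_pos hs]
    exact (h s h1 hs).1
  have hBm : ∀ s, 1 ≤ s → s ≤ n → minorDet B s ≠ 0 := by
    intro s h1 hs
    rw [minorDet, dif_pos hs]
    exact (h s h1 hs).2.1
  obtain ⟨hAz, hAn⟩ := main_count n A hA hAm
  obtain ⟨hBz, hBn⟩ := main_count n B hB hBm
  have hsign : ∀ s, s ≤ n → 0 < (minorDet A s).re * (minorDet B s).re := by
    intro s hs
    rcases Nat.eq_zero_or_pos s with h0 | h1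
    · rw [h0, minorDet_zero, minorDet_zero]
      norm_num
    · rw [minorDet, minorDet, dif_pos hs, dif_pos hs]
      exact (h s h1 hs).2.2
  have hNeg : iNeg hA = iNeg hB := by
    rw [hAn, hBn]
    congr 1
    apply Finset.filter_congr
    intro s hs
    rw [Finset.mem_range] at hs
    have k1 := hsign (s+1) hs
    have k0 := hsign s hs.le
    have key := mul_pos k1 k0
    constructor
    · intro hlt
      nlinarith [key]
    · intro hlt
      nlinarith [key]
  have hZero : iZero hA = iZero hB := by rw [hAz, hBz]
  have hPos : iPos hA = iPos hB := by
    have t1 := counts_total hA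
    have t2 := counts_total hB
    omega
  exact ⟨hNeg, hZero, hPos⟩
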